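/- For a ≠ 0 and any b, κ ∈ ℝ, the identity (√π/2)·∫_κ^∞ exp(−t²)·erf(at+b) dt = −(π/4)·erf(aκ+b)·erf(κ) + sign(a)·( π/4 − I_{1/|a|, −b/a}(∞) + I_{1/|a|, −b/a}((aκ+b)·sign(a)) ) holds, where I_{a,b}(x) = (√π/2)∫₀ˣ exp(−t²)erf(at+b)dt and I_{a,b}(∞) is its limit as x → ∞. -/

import Mathlib

open MeasureTheory Real Filter

/-- The error function. -/
noncomputable def erf (x : ℝ) : ℝ :=
  (2 / Real.sqrt Real.pi) * ∫ t in (0:ℝ)..x, Real.exp (-t^2)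

lemma cont_gauss : Continuous (fun t : ℝ => Real.exp (-t^2)) := by continuity

lemma hasDerivAt_erf (x : ℝ) :
    HasDerivAt erf (2 / Real.sqrt Real.pi * Real.exp (-x^2)) x := by
  have h : HasDerivAt (fun y => ∫ t in (0:ℝ)..y, Real.exp (-t^2)) (Real.exp (-x^2)) x := by
    refine intervalIntegral.integral_hasDerivAt_right
      (cont_gauss.intervalIntegrable _ _)
      (cont_gauss.stronglyMeasurableAtFilter _ _) cont_gauss.continuousAt
  exact h.const_mul _

lemma continuous_erf : Continuous erf := by
  have : ∀ x, HasDerivAt erf (2 / Real.sqrt Real.pi * Real.exp (-x^2)) x := hasDerivAt_erf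
  exact continuous_iff_continuousAt.mpr fun x => (this x).continuousAt

lemma erf_neg (x : ℝ) : erf (-x) = - erf x := by
  unfold erf
  have h : ∫ t in (0:ℝ)..(-x), Real.exp (-t^2) = - ∫ t in (0:ℝ)..x, Real.exp (-t^2) := by
    have h2 := intervalIntegral.integral_comp_neg (a := (0:ℝ)) (b := -x)
      (fun t : ℝ => Real.exp (-t^2))
    simp only [neg_sq, neg_neg, neg_zero] at h2
    rw [h2, intervalIntegral.integral_symm]
  rw [h]; ring

lemma integrable_gauss : Integrable (fun t : ℝ => Real.exp (-t^2)) := by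
  simpa using integrable_exp_neg_mul_sq (by norm_num : (0:ℝ) < 1)

lemma abs_erf_le (x : ℝ) : |erf x| ≤ 2 := by
  have key : ∀ y : ℝ, 0 ≤ y → |∫ t in (0:ℝ)..y, Real.exp (-t^2)| ≤ Real.sqrt Real.pi := by
    intro y hy
    rw [intervalIntegral.integral_of_le hy]
    have h0 : (0:ℝ) ≤ ∫ t in Set.Ioc (0:ℝ) y, Real.exp (-t^2) :=
      setIntegral_nonneg measurableSet_Ioc (fun t _ => (Real.exp_pos _).le)
    rw [abs_of_nonneg h0]
    have h1 : ∫ t in Set.Ioc (0:ℝ) y, Real.exp (-t^2) ≤ ∫ t : ℝ, Real.exp (-t^2) :=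
      setIntegral_le_integral integrable_gauss (Eventually.of_forall fun t => (Real.exp_pos _).le)
    have h2 : ∫ t : ℝ, Real.exp (-t^2) = Real.sqrt Real.pi := by
      have := integral_gaussian (1:ℝ)
      simpa using this
    linarith
  have hbound : |∫ t in (0:ℝ)..x, Real.exp (-t^2)| ≤ Real.sqrt Real.pi := by
    rcases le_total 0 x with h | h
    · exact key x h
    · rw [intervalIntegral.integral_symm, abs_neg]
      have := key (-x) (by linarith)
      have h2 := intervalIntegral.integral_comp_neg (a := (0:ℝ)) (b := -x)
        (fun t : ℝ => Real.exp (-t^2))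
      simp only [neg_sq, neg_neg, neg_zero] at h2
      rw [← h2]; exact this
  have hπ : (0:ℝ) < Real.sqrt Real.pi := Real.sqrt_pos.mpr Real.pi_pos
  unfold erf
  rw [abs_mul, abs_of_nonneg (by positivity : (0:ℝ) ≤ 2 / Real.sqrt Real.pi)]
  calc 2 / Real.sqrt Real.pi * |∫ t in (0:ℝ)..x, Real.exp (-t^2)|
      ≤ 2 / Real.sqrt Real.pi * Real.sqrt Real.pi := by
        apply mul_le_mul_of_nonneg_left hbound (by positivity)
    _ = 2 := by field_simp

lemma erf_tendsto_one : Tendsto erf atTop (nhds 1) := by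
  have h := MeasureTheory.intervalIntegral_tendsto_integral_Ioi (a := (0:ℝ))
    (f := fun t : ℝ => Real.exp (-t^2)) integrable_gauss.integrableOn tendsto_id
  have h2 : ∫ t in Set.Ioi (0:ℝ), Real.exp (-t^2) = Real.sqrt Real.pi / 2 := by
    have := integral_gaussian_Ioi (1:ℝ)
    simpa using this
  rw [h2] at h
  have h3 := h.const_mul (2 / Real.sqrt Real.pi)
  have hπ : Real.sqrt Real.pi ≠ 0 := ne_of_gt (Real.sqrt_pos.mpr Real.pi_pos)
  have : 2 / Real.sqrt Real.pi * (Real.sqrt Real.pi / 2) = 1 := by field_simp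
  rw [this] at h3
  exact h3

/-- The function I_{a,b}(x) = (√π/2)·∫₀ˣ exp(−t²)·erf(at + b) dt. -/
noncomputable def Iab (a b x : ℝ) : ℝ :=
  (Real.sqrt Real.pi / 2) * ∫ t in (0:ℝ)..x, Real.exp (-t^2) * erf (a * t + b)

lemma key (a b κ x : ℝ) (ha : a ≠ 0) :
    (Real.sqrt Real.pi / 2) * ∫ t in κ..x, Real.exp (-t^2) * erf (a * t + b) =
      Real.pi/4 * (erf (a*x+b) * erf x) - Real.pi/4 * (erf (a*κ+b) * erf κ)
      - Real.sign a * (Iab (1/|a|) (-b/a) ((a*x+b)*Real.sign a)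
          - Iab (1/|a|) (-b/a) ((a*κ+b)*Real.sign a)) := by
  have hπ : Real.sqrt Real.pi ≠ 0 := ne_of_gt (Real.sqrt_pos.mpr Real.pi_pos)
  have hππ : Real.sqrt Real.pi * Real.sqrt Real.pi = Real.pi :=
    Real.mul_self_sqrt Real.pi_pos.le
  have hv : ∀ t : ℝ, t ∈ Set.uIcc κ x →
      HasDerivAt (fun y => Real.sqrt Real.pi / 2 * erf y) (Real.exp (-t^2)) t := by
    intro t _
    have := (hasDerivAt_erf t).const_mul (Real.sqrt Real.pi / 2)
    refine this.congr_deriv ?_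
    rw [← mul_assoc, div_mul_div_comm, mul_comm (Real.sqrt Real.pi) 2,
      div_self (show (2:ℝ) * Real.sqrt Real.pi ≠ 0 by positivity), one_mul]
  have hu : ∀ t : ℝ, t ∈ Set.uIcc κ x →
      HasDerivAt (fun y => erf (a*y+b))
        (2 / Real.sqrt Real.pi * Real.exp (-(a*t+b)^2) * a) t := by
    intro t _
    have haff : HasDerivAt (fun y : ℝ => a*y+b) a t := by
      simpa using ((hasDerivAt_id t).const_mul a).add_const b
    have := (hasDerivAt_erf (a*t+b)).comp t haff; exact this
  have hu' : IntervalIntegrable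
      (fun t => 2 / Real.sqrt Real.pi * Real.exp (-(a*t+b)^2) * a) volume κ x :=
    (Continuous.intervalIntegrable (by continuity) _ _)
  have hv' : IntervalIntegrable (fun t : ℝ => Real.exp (-t^2)) volume κ x :=
    cont_gauss.intervalIntegrable _ _
  have hibp := intervalIntegral.integral_mul_deriv_eq_deriv_mul hu hv hu' hv'
  have hflip : (∫ t in κ..x, Real.exp (-t^2) * erf (a*t+b)) =
      ∫ t in κ..x, erf (a*t+b) * Real.exp (-t^2) := by
    simp_rw [mul_comm]
  have hres : (∫ t in κ..x, (2 / Real.sqrt Real.pi * Real.exp (-(a*t+b)^2) * a)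
      * (Real.sqrt Real.pi / 2 * erf t)) =
      a * ∫ t in κ..x, Real.exp (-(a*t+b)^2) * erf t := by
    rw [← intervalIntegral.integral_const_mul]
    apply intervalIntegral.integral_congr
    intro t _
    field_simp
  have habs : |a| ≠ 0 := abs_ne_zero.mpr ha
  have hs1 : Real.sign a * |a| = a := by
    rcases ha.lt_or_gt with h | h
    · rw [Real.sign_of_neg h, abs_of_neg h]; ring
    · rw [Real.sign_of_pos h, abs_of_pos h]; ring
  have hs2 : Real.sign a * Real.sign a = 1 := by
    rcases ha.lt_or_gt with h | h
    · rw [Real.sign_of_neg h]; norm_num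
    · rw [Real.sign_of_pos h]; norm_num
  have haa : a * Real.sign a = |a| := by
    calc a * Real.sign a = (Real.sign a * |a|) * Real.sign a := by rw [hs1]
      _ = |a| * (Real.sign a * Real.sign a) := by ring
      _ = |a| := by rw [hs2, mul_one]
  have hAs : a * |a|⁻¹ = Real.sign a := by
    field_simp
    linear_combination -hs1
  have hsub : (∫ t in κ..x, Real.exp (-(a*t+b)^2) * erf t)
      = |a|⁻¹ * ∫ s in ((a*κ+b)*Real.sign a)..((a*x+b)*Real.sign a),
          Real.exp (-s^2) * erf (1/|a| * s + -b/a) := by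
    have h := intervalIntegral.integral_comp_mul_add (a := κ) (b := x)
      (f := fun s => Real.exp (-s^2) * erf (1/|a| * s + -b/a)) habs (b * Real.sign a)
    have hrs : Real.sign a / |a| = 1 / a := by
      rw [div_eq_div_iff habs ha]
      calc Real.sign a * a = Real.sign a * (Real.sign a * |a|) := by rw [hs1]
        _ = |a| * (Real.sign a * Real.sign a) := by ring
        _ = 1 * |a| := by rw [hs2]; ring
    have hpt : ∀ t : ℝ, Real.exp (-(|a| * t + b * Real.sign a)^2)
        * erf (1/|a| * (|a| * t + b * Real.sign a) + -b/a)
        = Real.exp (-(a*t+b)^2) * erf t := by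
      intro t
      have hmul : (|a| * t + b * Real.sign a) * Real.sign a = a*t+b := by
        calc (|a| * t + b * Real.sign a) * Real.sign a
            = (|a| * Real.sign a) * t + b * (Real.sign a * Real.sign a) := by ring
          _ = a*t+b := by rw [mul_comm (|a|) (Real.sign a), hs1, hs2, mul_one]
      have e1 : (|a| * t + b * Real.sign a)^2 = (a*t+b)^2 := by
        rw [← hmul, mul_pow, show Real.sign a ^ 2 = 1 from by rw [sq]; exact hs2, mul_one]
      have e2 : 1/|a| * (|a| * t + b * Real.sign a) + -b/a = t := by
        have h1 : (1:ℝ)/|a| * (|a| * t + b * Real.sign a)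
            = t + b * (Real.sign a / |a|) := by
          field_simp
        rw [h1, hrs]
        field_simp
        ring
      rw [e1, e2]
    have hep : ∀ y : ℝ, |a| * y + b * Real.sign a = (a*y+b)*Real.sign a := by
      intro y
      rw [show (a*y+b)*Real.sign a = (a*Real.sign a)*y + b*Real.sign a from by ring, haa]
    simp_rw [hpt, hep] at h
    rw [h, smul_eq_mul]
  have hcf : Continuous (fun s : ℝ => Real.exp (-s^2) * erf (1/|a| * s + -b/a)) :=
    cont_gauss.mul (continuous_erf.comp (by continuity))
  have hsplit := intervalIntegral.integral_interval_sub_left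
    (f := fun s : ℝ => Real.exp (-s^2) * erf (1/|a| * s + -b/a)) (μ := volume)
    (a := (0:ℝ)) (b := (a*x+b)*Real.sign a) (c := (a*κ+b)*Real.sign a)
    (hcf.intervalIntegrable _ _) (hcf.intervalIntegrable _ _)
  rw [hflip, hibp, hres, hsub, ← hsplit]
  simp only [Iab]
  linear_combination ((erf (a*x+b) * erf x - erf (a*κ+b) * erf κ)/4) * hππ
    - (Real.sqrt Real.pi / 2 *
        ((∫ s in (0:ℝ)..((a*x+b)*Real.sign a), Real.exp (-s^2) * erf (1/|a| * s + -b/a))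
        - ∫ s in (0:ℝ)..((a*κ+b)*Real.sign a), Real.exp (-s^2) * erf (1/|a| * s + -b/a))) * hAs

theorem Iab_integration_by_parts (a b κ L : ℝ) (ha : a ≠ 0)
    (hL : Tendsto (fun x => Iab (1/|a|) (-b/a) x) atTop (nhds L)) :
    (Real.sqrt Real.pi / 2) * ∫ t in Set.Ioi κ, Real.exp (-t^2) * erf (a * t + b) =
      -(Real.pi / 4) * erf (a * κ + b) * erf κ
        + Real.sign a *
          (Real.pi / 4 - L + Iab (1/|a|) (-b/a) ((a * κ + b) * Real.sign a)) := by
  have hs2 : Real.sign a * Real.sign a = 1 := by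
    rcases ha.lt_or_gt with h | h
    · rw [Real.sign_of_neg h]; norm_num
    · rw [Real.sign_of_pos h]; norm_num
  have hs1 : Real.sign a * |a| = a := by
    rcases ha.lt_or_gt with h | h
    · rw [Real.sign_of_neg h, abs_of_neg h]; ring
    · rw [Real.sign_of_pos h, abs_of_pos h]; ring
  have haa : a * Real.sign a = |a| := by
    calc a * Real.sign a = (Real.sign a * |a|) * Real.sign a := by rw [hs1]
      _ = |a| * (Real.sign a * Real.sign a) := by ring
      _ = |a| := by rw [hs2, mul_one]
  have hInt : IntegrableOn (fun t : ℝ => Real.exp (-t^2) * erf (a*t+b)) (Set.Ioi κ) := by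
    apply Integrable.mono' ((integrable_gauss.const_mul 2).integrableOn)
    · exact ((cont_gauss.mul (continuous_erf.comp (by continuity))).aestronglyMeasurable).restrict
    · filter_upwards with t
      rw [Real.norm_eq_abs, abs_mul, abs_of_nonneg (Real.exp_pos _).le]
      have h1 := abs_erf_le (a*t+b)
      have h2 := (Real.exp_pos (-t^2)).le
      nlinarith [abs_nonneg (erf (a*t+b))]
  have h1 : Tendsto (fun x => (Real.sqrt Real.pi / 2) *
      ∫ t in κ..x, Real.exp (-t^2) * erf (a*t+b)) atTop
      (nhds ((Real.sqrt Real.pi / 2) *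
        ∫ t in Set.Ioi κ, Real.exp (-t^2) * erf (a*t+b))) :=
    (MeasureTheory.intervalIntegral_tendsto_integral_Ioi κ hInt tendsto_id).const_mul _
  have habs_pos : (0:ℝ) < |a| := abs_pos.mpr ha
  have hg : Tendsto (fun x => (a*x+b)*Real.sign a) atTop atTop := by
    have heq : (fun x => (a*x+b)*Real.sign a) = fun x => |a| * x + b * Real.sign a := by
      funext x; rw [← haa]; ring
    rw [heq]
    exact tendsto_atTop_add_const_right _ _ (tendsto_id.const_mul_atTop habs_pos)
  have herf_comp : ∀ x, erf (a*x+b) = Real.sign a * erf ((a*x+b)*Real.sign a) := by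
    intro x
    rcases ha.lt_or_gt with h | h
    · rw [Real.sign_of_neg h, show (a*x+b) * (-1 : ℝ) = -(a*x+b) from by ring, erf_neg]; ring
    · rw [Real.sign_of_pos h, mul_one, one_mul]
  have h2 : Tendsto (fun x => erf (a*x+b)) atTop (nhds (Real.sign a)) := by
    have hc := (erf_tendsto_one.comp hg).const_mul (Real.sign a)
    simp only [Function.comp_def, mul_one] at hc
    have heq : (fun x => Real.sign a * erf ((a*x+b)*Real.sign a))
        = fun x => erf (a*x+b) := by
      funext x; exact (herf_comp x).symm
    rwa [heq] at hc
  have h3 : Tendsto (fun x => Iab (1/|a|) (-b/a) ((a*x+b)*Real.sign a)) atTop (nhds L) :=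
    hL.comp hg
  have hRHS : Tendsto (fun x => Real.pi/4 * (erf (a*x+b) * erf x)
      - Real.pi/4 * (erf (a*κ+b) * erf κ)
      - Real.sign a * (Iab (1/|a|) (-b/a) ((a*x+b)*Real.sign a)
          - Iab (1/|a|) (-b/a) ((a*κ+b)*Real.sign a))) atTop
      (nhds (Real.pi/4 * (Real.sign a * 1) - Real.pi/4 * (erf (a*κ+b) * erf κ)
        - Real.sign a * (L - Iab (1/|a|) (-b/a) ((a*κ+b)*Real.sign a)))) :=
    (((h2.mul erf_tendsto_one).const_mul _).sub tendsto_const_nhds).sub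
      ((h3.sub tendsto_const_nhds).const_mul _)
  have h5 : Tendsto (fun x => (Real.sqrt Real.pi / 2) *
      ∫ t in κ..x, Real.exp (-t^2) * erf (a*t+b)) atTop
      (nhds (Real.pi/4 * (Real.sign a * 1) - Real.pi/4 * (erf (a*κ+b) * erf κ)
        - Real.sign a * (L - Iab (1/|a|) (-b/a) ((a*κ+b)*Real.sign a)))) := by
    have heq : (fun x => (Real.sqrt Real.pi / 2) *
        ∫ t in κ..x, Real.exp (-t^2) * erf (a*t+b))
        = fun x => Real.pi/4 * (erf (a*x+b) * erf x)
          - Real.pi/4 * (erf (a*κ+b) * erf κ)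
          - Real.sign a * (Iab (1/|a|) (-b/a) ((a*x+b)*Real.sign a)
              - Iab (1/|a|) (-b/a) ((a*κ+b)*Real.sign a)) := by
      funext x; exact key a b κ x ha
    rw [heq]
    exact hRHS
  have hfin := tendsto_nhds_unique h1 h5
  rw [hfin]
  ring
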